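/- arXiv:1202.5103 — 4 statements merged into one kernel-verified Lean document; each statement's English description precedes it below -/
import Mathlib

section
/- Let H be a complex Hilbert space, Π an orthogonal projection on H (a bounded operator with Π = Π* = Π²), and χ, η bounded self-adjoint operators on H with χ² + η² ≤ 1 in the Loewner order. Define the localized operators X = ΠχΠ + (1−Π)χ(1−Π) and Y = ΠηΠ + (1−Π)η(1−Π). If Q and Q' are bounded self-adjoint operators on H satisfying −Π ≤ Q ≤ 1−Π and −Π ≤ Q' ≤ 1−Π, then −Π ≤ X Q X + Y Q' Y ≤ 1 − Π. -/
open scoped ComplexOrder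

/-- The Loewner order on bounded operators on a complex Hilbert space:
`A ≤ B` iff `⟨x, (B - A) x⟩ ≥ 0` for all `x` (as a complex number, using the
partial order on `ℂ`, i.e. `⟨x, (B - A) x⟩` is a nonnegative real). -/
def LoewnerLE {H : Type*} [NormedAddCommGroup H] [InnerProductSpace ℂ H]
    (A B : H →L[ℂ] H) : Prop :=
  ∀ x : H, (0 : ℂ) ≤ (inner ℂ x ((B - A) x) : ℂ)

theorem stmt0 {H : Type*} [NormedAddCommGroup H] [InnerProductSpace ℂ H] [CompleteSpace H]
    (P : H →L[ℂ] H) (hP : IsSelfAdjoint P) (hP2 : P * P = P)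
    (χ η : H →L[ℂ] H) (hχ : IsSelfAdjoint χ) (hη : IsSelfAdjoint η)
    (hχη : LoewnerLE (χ * χ + η * η) 1)
    (X Y : H →L[ℂ] H)
    (hX : X = P * χ * P + (1 - P) * χ * (1 - P))
    (hY : Y = P * η * P + (1 - P) * η * (1 - P))
    (Q Q' : H →L[ℂ] H) (hQ : IsSelfAdjoint Q) (hQ' : IsSelfAdjoint Q')
    (hQl : LoewnerLE (-P) Q) (hQu : LoewnerLE Q (1 - P))
    (hQ'l : LoewnerLE (-P) Q') (hQ'u : LoewnerLE Q' (1 - P)) :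
    LoewnerLE (-P) (X * Q * X + Y * Q' * Y) ∧
      LoewnerLE (X * Q * X + Y * Q' * Y) (1 - P) := by
  have hP2' : ∀ z : H →L[ℂ] H, P * (P * z) = P * z := fun z => by rw [← mul_assoc, hP2]
  -- conjugation preserves positivity
  have conj : ∀ (C T : H →L[ℂ] H), IsSelfAdjoint C → (∀ y, (0:ℂ) ≤ inner ℂ y (T y)) →
      ∀ x, (0:ℂ) ≤ inner ℂ x ((C * T * C) x) := by
    intro C T hC h x
    have h1 : (C * T * C) x = C (T (C x)) := rfl
    rw [h1, ← ContinuousLinearMap.adjoint_inner_left, hC.adjoint_eq]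
    exact h (C x)
  -- positivity of idempotent self-adjoint operators
  have projpos : ∀ (E : H →L[ℂ] H), IsSelfAdjoint E → E * E = E →
      ∀ y, (0:ℂ) ≤ inner ℂ y (E y) := by
    intro E hE hE2 y
    have h1 : E y = E (E y) := (congrArg (fun A : H →L[ℂ] H => A y) hE2).symm
    rw [h1, ← ContinuousLinearMap.adjoint_inner_left, hE.adjoint_eq,
      inner_self_eq_norm_sq_to_K]
    positivity
  have hRsa : IsSelfAdjoint ((1 : H →L[ℂ] H) - P) :=
    (IsSelfAdjoint.one _).sub hP
  have hR2 : ((1 : H →L[ℂ] H) - P) * (1 - P) = 1 - P := by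
    simp only [mul_sub, sub_mul, mul_one, one_mul, hP2]
    abel
  have posP : ∀ y, (0:ℂ) ≤ inner ℂ y (P y) := projpos P hP hP2
  have posR : ∀ y, (0:ℂ) ≤ inner ℂ y (((1 : H →L[ℂ] H) - P) y) := projpos _ hRsa hR2
  have hXsa : IsSelfAdjoint X := by
    rw [hX]
    simp only [IsSelfAdjoint, star_add, star_mul, star_sub, star_one, hP.star_eq,
      hχ.star_eq, mul_assoc]
  have hYsa : IsSelfAdjoint Y := by
    rw [hY]
    simp only [IsSelfAdjoint, star_add, star_mul, star_sub, star_one, hP.star_eq,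
      hη.star_eq, mul_assoc]
  constructor
  · -- lower bound
    have id2 : X * (Q - -P) * X + Y * (Q' - -P) * Y + P * (1 - (χ * χ + η * η)) * P
        + P * (χ * (1 - P) * χ) * P + P * (η * (1 - P) * η) * P
        = (X * Q * X + Y * Q' * Y) - -P := by
      rw [hX, hY]
      simp only [mul_sub, sub_mul, mul_add, add_mul, mul_one, one_mul, mul_assoc, hP2, hP2',
        sub_neg_eq_add]
      abel
    intro x
    rw [← id2]
    simp only [ContinuousLinearMap.add_apply, inner_add_right]
    exact add_nonneg (add_nonneg (add_nonneg (add_nonneg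
      (conj X _ hXsa hQl x) (conj Y _ hYsa hQ'l x)) (conj P _ hP hχη x))
      (conj P _ hP (conj χ _ hχ posR) x)) (conj P _ hP (conj η _ hη posR) x)
  · -- upper bound
    have id1 : X * ((1 - P) - Q) * X + Y * ((1 - P) - Q') * Y
        + (1 - P) * (1 - (χ * χ + η * η)) * (1 - P)
        + (1 - P) * (χ * P * χ) * (1 - P) + (1 - P) * (η * P * η) * (1 - P)
        = (1 - P) - (X * Q * X + Y * Q' * Y) := by
      rw [hX, hY]
      simp only [mul_sub, sub_mul, mul_add, add_mul, mul_one, one_mul, mul_assoc, hP2, hP2']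
      abel
    intro x
    rw [← id1]
    simp only [ContinuousLinearMap.add_apply, inner_add_right]
    exact add_nonneg (add_nonneg (add_nonneg (add_nonneg
      (conj X _ hXsa hQu x) (conj Y _ hYsa hQ'u x)) (conj _ _ hRsa hχη x))
      (conj _ _ hRsa (conj χ _ hχ posP) x)) (conj _ _ hRsa (conj η _ hη posP) x)
end

section
/- Let H be a complex Hilbert space, Π an orthogonal projection on H, and χ, η bounded self-adjoint operators on H with χ² + η² ≤ 1 in the Loewner order. Define X = ΠχΠ + (1−Π)χ(1−Π) and Y = ΠηΠ + (1−Π)η(1−Π). Then X Π X + Y Π Y ≤ Π and X (1−Π) X + Y (1−Π) Y ≤ 1 − Π in the Loewner order. -/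
open scoped ComplexOrder

lemma aux_le {H : Type*} [NormedAddCommGroup H] [InnerProductSpace ℂ H] [CompleteSpace H]
    (P : H →L[ℂ] H) (hP : IsSelfAdjoint P) (hP2 : P * P = P)
    (χ η : H →L[ℂ] H) (hχ : IsSelfAdjoint χ) (hη : IsSelfAdjoint η)
    (hχη : LoewnerLE (χ * χ + η * η) 1) :
    LoewnerLE ((P * χ * P + (1 - P) * χ * (1 - P)) * P * (P * χ * P + (1 - P) * χ * (1 - P))
      + (P * η * P + (1 - P) * η * (1 - P)) * P * (P * η * P + (1 - P) * η * (1 - P))) P := by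
  have hp : ∀ y, P (P y) = P y := fun y => congrFun (congrArg DFunLike.coe hP2) y
  have hsym := hP.isSymmetric
  have key : ∀ (A : H →L[ℂ] H) (x : H),
      ((P * A * P + (1 - P) * A * (1 - P)) * P * (P * A * P + (1 - P) * A * (1 - P))) x
        = P (A (P (A (P x)))) := by
    intro A x
    simp [ContinuousLinearMap.mul_apply, ContinuousLinearMap.sub_apply,
      ContinuousLinearMap.one_apply, ContinuousLinearMap.add_apply, map_sub, map_add, hp]
  -- the inner ℂ product of x with P A P A P x is ‖P (A (P x))‖²
  have hin : ∀ (A : H →L[ℂ] H), IsSelfAdjoint A → ∀ x : H,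
      (inner ℂ x (P (A (P (A (P x))))) : ℂ) = (‖P (A (P x))‖ : ℂ) ^ 2 := by
    intro A hA x
    calc (inner ℂ x (P (A (P (A (P x))))) : ℂ)
        = inner ℂ (P x) (A (P (A (P x)))) := (hsym x _).symm
      _ = inner ℂ (A (P x)) (P (A (P x))) := (hA.isSymmetric _ _).symm
      _ = inner ℂ (A (P x)) (P (P (A (P x)))) := by rw [hp]
      _ = inner ℂ (P (A (P x))) (P (A (P x))) := (hsym _ _).symm
      _ = (‖P (A (P x))‖ : ℂ) ^ 2 := inner_self_eq_norm_sq_to_K _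
  have hinP : ∀ x : H, (inner ℂ x (P x) : ℂ) = (‖P x‖ : ℂ) ^ 2 := by
    intro x
    calc (inner ℂ x (P x) : ℂ) = inner ℂ x (P (P x)) := by rw [hp]
      _ = inner ℂ (P x) (P x) := (hsym _ _).symm
      _ = (‖P x‖ : ℂ) ^ 2 := inner_self_eq_norm_sq_to_K _
  -- contraction: ‖P v‖ ≤ ‖v‖
  have hPcontr : ∀ v : H, ‖P v‖ ^ 2 ≤ ‖v‖ ^ 2 := by
    intro v
    have h2 : (‖P v‖ : ℝ) ^ 2 = Complex.re (inner ℂ v (P v)) := by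
      rw [hinP v, ← Complex.ofReal_pow, Complex.ofReal_re]
    have h3 : Complex.re (inner ℂ v (P v) : ℂ) ≤ ‖v‖ * ‖P v‖ := by
      simpa using re_inner_le_norm (𝕜 := ℂ) v (P v)
    nlinarith [norm_nonneg (P v), norm_nonneg v, h2, h3]
  intro x
  set u := P x with hu
  -- hypothesis at u : ‖χ u‖² + ‖η u‖² ≤ ‖u‖²
  have hhyp : ‖χ u‖ ^ 2 + ‖η u‖ ^ 2 ≤ ‖u‖ ^ 2 := by
    have h0 := hχη u
    have e : (inner ℂ u (((1 : H →L[ℂ] H) - (χ * χ + η * η)) u) : ℂ)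
        = (‖u‖ : ℂ) ^ 2 - (‖χ u‖ : ℂ) ^ 2 - (‖η u‖ : ℂ) ^ 2 := by
      have e1 : (inner ℂ u (χ (χ u)) : ℂ) = (‖χ u‖ : ℂ) ^ 2 :=
        (hχ.isSymmetric u (χ u)).symm.trans (inner_self_eq_norm_sq_to_K _)
      have e2 : (inner ℂ u (η (η u)) : ℂ) = (‖η u‖ : ℂ) ^ 2 :=
        (hη.isSymmetric u (η u)).symm.trans (inner_self_eq_norm_sq_to_K _)
      simp [ContinuousLinearMap.sub_apply, ContinuousLinearMap.add_apply,
        ContinuousLinearMap.mul_apply, ContinuousLinearMap.one_apply, inner_sub_right,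
        inner_add_right, e1, e2, inner_self_eq_norm_sq_to_K]
      ring
    rw [e] at h0
    have h1 : (0:ℂ) ≤ ((‖u‖ ^ 2 - ‖χ u‖ ^ 2 - ‖η u‖ ^ 2 : ℝ) : ℂ) := by
      push_cast
      convert h0 using 1
    have h2 := Complex.zero_le_real.mp h1
    linarith
  -- assemble
  have expand : (inner ℂ x ((P - ((P * χ * P + (1 - P) * χ * (1 - P)) * P *
      (P * χ * P + (1 - P) * χ * (1 - P)) + (P * η * P + (1 - P) * η * (1 - P)) * P *
      (P * η * P + (1 - P) * η * (1 - P)))) x) : ℂ)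
      = ((‖u‖ ^ 2 - ‖P (χ u)‖ ^ 2 - ‖P (η u)‖ ^ 2 : ℝ) : ℂ) := by
    rw [ContinuousLinearMap.sub_apply, ContinuousLinearMap.add_apply, inner_sub_right,
      inner_add_right, key χ x, key η x, hin χ hχ x, hin η hη x, hinP x, ← hu]
    push_cast
    ring
  rw [expand]
  rw [Complex.le_def]
  constructor
  · simp only [Complex.zero_re, Complex.ofReal_re]
    have c1 := hPcontr (χ u)
    have c2 := hPcontr (η u)
    linarith
  · simp [← Complex.ofReal_pow]

theorem stmt1 {H : Type*} [NormedAddCommGroup H] [InnerProductSpace ℂ H] [CompleteSpace H]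
    (P : H →L[ℂ] H) (hP : IsSelfAdjoint P) (hP2 : P * P = P)
    (χ η : H →L[ℂ] H) (hχ : IsSelfAdjoint χ) (hη : IsSelfAdjoint η)
    (hχη : LoewnerLE (χ * χ + η * η) 1)
    (X Y : H →L[ℂ] H)
    (hX : X = P * χ * P + (1 - P) * χ * (1 - P))
    (hY : Y = P * η * P + (1 - P) * η * (1 - P)) :
    LoewnerLE (X * P * X + Y * P * Y) P ∧
      LoewnerLE (X * (1 - P) * X + Y * (1 - P) * Y) (1 - P) := by
  have hQ : IsSelfAdjoint (1 - P) := by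
    rw [IsSelfAdjoint] at hP ⊢
    simp [star_sub, hP]
  have hQ2 : (1 - P) * (1 - P) = 1 - P := by
    rw [sub_mul, mul_sub, mul_sub, one_mul, one_mul, mul_one, hP2]; abel
  constructor
  · rw [hX, hY]; exact aux_le P hP hP2 χ η hχ hη hχη
  · have h11 : (1 : H →L[ℂ] H) - (1 - P) = P := sub_sub_cancel 1 P
    have h := aux_le (1 - P) hQ hQ2 χ η hχ hη hχη
    rw [h11] at h
    rw [hX, hY, add_comm (P * χ * P) ((1 - P) * χ * (1 - P)),
      add_comm (P * η * P) ((1 - P) * η * (1 - P))]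
    exact h
end

section
/- Let H be a complex Hilbert space, Π an orthogonal projection on H, and χ a bounded self-adjoint operator on H with χ² ≤ 1 in the Loewner order. Define X = ΠχΠ + (1−Π)χ(1−Π). If Q is a bounded self-adjoint operator on H with −Π ≤ Q ≤ 1−Π, then −Π ≤ X Q X ≤ 1 − Π. -/
open scoped ComplexOrder

section Aux

variable {H : Type*} [NormedAddCommGroup H] [InnerProductSpace ℂ H] [CompleteSpace H]

local notation "⟪" x ", " y "⟫" => @inner ℂ _ _ x y

lemma sa_inner {A : H →L[ℂ] H} (hA : IsSelfAdjoint A) (x y : H) :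
    ⟪A x, y⟫ = ⟪x, A y⟫ :=
  (ContinuousLinearMap.isSelfAdjoint_iff_isSymmetric.mp hA) x y

lemma loewnerLE_congr {A B C D : H →L[ℂ] H} (h : B - A = D - C) (hAB : LoewnerLE A B) :
    LoewnerLE C D := by
  intro x; rw [← h]; exact hAB x

lemma proj_norm_le {P : H →L[ℂ] H} (hP : IsSelfAdjoint P) (hP2 : P * P = P) (y : H) :
    ‖P y‖ ≤ ‖y‖ := by
  have h1 : ⟪P y, P y⟫ = ⟪y, P y⟫ := by
    rw [sa_inner hP]
    congr 1
    have := congrArg (fun T : H →L[ℂ] H => T y) hP2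
    simpa using this
  have h2 : (‖P y‖ : ℝ) ^ 2 ≤ ‖y‖ * ‖P y‖ := by
    have := norm_inner_le_norm (𝕜 := ℂ) y (P y)
    calc (‖P y‖ : ℝ) ^ 2 = ‖⟪P y, P y⟫‖ := by
            rw [inner_self_eq_norm_sq_to_K]; simp
      _ = ‖⟪y, P y⟫‖ := by rw [h1]
      _ ≤ ‖y‖ * ‖P y‖ := this
  rcases eq_or_lt_of_le (norm_nonneg (P y)) with h | h
  · rw [← h]; exact norm_nonneg y
  · nlinarith

lemma contr_norm_le {χ : H →L[ℂ] H} (hχ : IsSelfAdjoint χ) (hχ1 : LoewnerLE (χ * χ) 1)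
    (y : H) : ‖χ y‖ ≤ ‖y‖ := by
  have h0 := hχ1 y
  have h1 : ((1 : H →L[ℂ] H) - χ * χ) y = y - χ (χ y) := by
    simp [ContinuousLinearMap.sub_apply, ContinuousLinearMap.mul_apply]
  rw [h1, inner_sub_right] at h0
  have h2 : ⟪y, χ (χ y)⟫ = ⟪χ y, χ y⟫ := (sa_inner hχ y (χ y)).symm
  rw [h2, inner_self_eq_norm_sq_to_K, inner_self_eq_norm_sq_to_K] at h0
  have h3 : (0 : ℝ) ≤ ‖y‖ ^ 2 - ‖χ y‖ ^ 2 :=     Complex.zero_le_real.mp (by push_cast; exact h0)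
  nlinarith [norm_nonneg y, norm_nonneg (χ y)]

lemma key {P χ X Q : H →L[ℂ] H} (hP : IsSelfAdjoint P) (hP2 : P * P = P)
    (hχ : IsSelfAdjoint χ) (hχ1 : LoewnerLE (χ * χ) 1)
    (hXsa : IsSelfAdjoint X) (hPX : P * X = P * χ * P)
    (hQl : LoewnerLE (-P) Q) :
    LoewnerLE (-P) (X * Q * X) := by
  intro x
  have e1 : (X * Q * X - -P) x = X (Q (X x)) + P x := by
    simp [ContinuousLinearMap.sub_apply, ContinuousLinearMap.mul_apply,
      ContinuousLinearMap.neg_apply, sub_neg_eq_add, ContinuousLinearMap.add_apply]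
  rw [e1, inner_add_right]
  have e2 : ⟪x, X (Q (X x))⟫ = ⟪X x, Q (X x)⟫ := (sa_inner hXsa x (Q (X x))).symm
  rw [e2]
  have hq := hQl (X x)
  have e3 : (Q - -P) (X x) = Q (X x) + P (X x) := by
    simp [ContinuousLinearMap.sub_apply, ContinuousLinearMap.neg_apply, sub_neg_eq_add,
      ContinuousLinearMap.add_apply]
  rw [e3, inner_add_right] at hq
  -- the remainder term
  have ePx : ⟪x, P x⟫ = (‖P x‖ : ℂ) ^ 2 := by
    have hpp : P x = P (P x) := by
      have := congrArg (fun T : H →L[ℂ] H => T x) hP2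
      simpa using this.symm
    calc ⟪x, P x⟫ = ⟪x, P (P x)⟫ := by rw [← hpp]
      _ = ⟪P x, P x⟫ := (sa_inner hP x (P x)).symm
      _ = (‖P x‖ : ℂ) ^ 2 := inner_self_eq_norm_sq_to_K (P x)
  have ePXx : ⟪X x, P (X x)⟫ = (‖P (X x)‖ : ℂ) ^ 2 := by
    have hpp : P (X x) = P (P (X x)) := by
      have := congrArg (fun T : H →L[ℂ] H => T (X x)) hP2
      simpa using this.symm
    calc ⟪X x, P (X x)⟫ = ⟪X x, P (P (X x))⟫ := by rw [← hpp]
      _ = ⟪P (X x), P (X x)⟫ := (sa_inner hP (X x) (P (X x))).symm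
      _ = (‖P (X x)‖ : ℂ) ^ 2 := inner_self_eq_norm_sq_to_K (P (X x))
  have hnorm : ‖P (X x)‖ ≤ ‖P x‖ := by
    have hfx : P (X x) = P (χ (P x)) := by
      have := congrArg (fun T : H →L[ℂ] H => T x) hPX
      simpa [ContinuousLinearMap.mul_apply] using this
    rw [hfx]
    calc ‖P (χ (P x))‖ ≤ ‖χ (P x)‖ := proj_norm_le hP hP2 _
      _ ≤ ‖P x‖ := contr_norm_le hχ hχ1 _
  have hrem : (0 : ℂ) ≤ ⟪x, P x⟫ - ⟪X x, P (X x)⟫ := by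
    rw [ePx, ePXx]
    have hr : (0 : ℝ) ≤ ‖P x‖ ^ 2 - ‖P (X x)‖ ^ 2 := by
      nlinarith [norm_nonneg (P (X x)), norm_nonneg (P x)]
    have : (0:ℂ) ≤ ((‖P x‖ ^ 2 - ‖P (X x)‖ ^ 2 : ℝ) : ℂ) := Complex.zero_le_real.mpr hr
    push_cast at this
    exact this
  calc (0 : ℂ) ≤ (⟪X x, Q (X x)⟫ + ⟪X x, P (X x)⟫) + (⟪x, P x⟫ - ⟪X x, P (X x)⟫) :=
        add_nonneg hq hrem
    _ = ⟪X x, Q (X x)⟫ + ⟪x, P x⟫ := by ring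

end Aux

theorem stmt2 {H : Type*} [NormedAddCommGroup H] [InnerProductSpace ℂ H] [CompleteSpace H]
    (P : H →L[ℂ] H) (hP : IsSelfAdjoint P) (hP2 : P * P = P)
    (χ : H →L[ℂ] H) (hχ : IsSelfAdjoint χ) (hχ1 : LoewnerLE (χ * χ) 1)
    (X : H →L[ℂ] H) (hX : X = P * χ * P + (1 - P) * χ * (1 - P))
    (Q : H →L[ℂ] H) (hQ : IsSelfAdjoint Q)
    (hQl : LoewnerLE (-P) Q) (hQu : LoewnerLE Q (1 - P)) :
    LoewnerLE (-P) (X * Q * X) ∧ LoewnerLE (X * Q * X) (1 - P) := by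
  have hP' : IsSelfAdjoint ((1 : H →L[ℂ] H) - P) := (IsSelfAdjoint.one (H →L[ℂ] H)).sub hP
  have hP'2 : ((1 : H →L[ℂ] H) - P) * (1 - P) = 1 - P := by
    simp [mul_sub, sub_mul, hP2]
  have hXsa : IsSelfAdjoint X := by
    rw [hX]
    have h1 := hχ.conjugate P
    rw [hP.star_eq] at h1
    have h2 := hχ.conjugate ((1 : H →L[ℂ] H) - P)
    rw [hP'.star_eq] at h2
    exact h1.add h2
  have hPX : P * X = P * χ * P := by
    rw [hX, mul_add]
    have h1 : P * (P * χ * P) = P * χ * P := by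
      rw [show P * (P * χ * P) = (P * P) * χ * P by noncomm_ring, hP2]
    have h2 : P * ((1 - P) * χ * (1 - P)) = 0 := by
      have : P * (1 - P) = 0 := by rw [mul_sub, mul_one, hP2, sub_self]
      rw [show P * ((1 - P) * χ * (1 - P)) = (P * (1 - P)) * χ * (1 - P) by noncomm_ring, this]
      simp
    rw [h1, h2, add_zero]
  have hP'X : (1 - P) * X = (1 - P) * χ * (1 - P) := by
    rw [hX, mul_add]
    have h2 : ((1 : H →L[ℂ] H) - P) * (P * χ * P) = 0 := by
      have : ((1 : H →L[ℂ] H) - P) * P = 0 := by rw [sub_mul, one_mul, hP2, sub_self]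
      rw [show ((1 : H →L[ℂ] H) - P) * (P * χ * P) = ((1 - P) * P) * χ * P by noncomm_ring, this]
      simp
    have h1 : ((1 : H →L[ℂ] H) - P) * ((1 - P) * χ * (1 - P)) = (1 - P) * χ * (1 - P) := by
      rw [show ((1 : H →L[ℂ] H) - P) * ((1 - P) * χ * (1 - P)) = ((1 - P) * (1 - P)) * χ * (1 - P) by noncomm_ring, hP'2]
    rw [h1, h2, zero_add]
  constructor
  · exact key hP hP2 hχ hχ1 hXsa hPX hQl
  · have hQ' : LoewnerLE (-(1 - P)) (-Q) :=
      loewnerLE_congr (by noncomm_ring) hQu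
    have := key hP' hP'2 hχ hχ1 hXsa hP'X hQ'
    refine loewnerLE_congr ?_ this
    noncomm_ring
end

section
/- Let H be a complex Hilbert space, Π an orthogonal projection on H, and χ, η bounded self-adjoint operators on H with χ² + η² ≤ 1 in the Loewner order. Define X = ΠχΠ + (1−Π)χ(1−Π) and Y = ΠηΠ + (1−Π)η(1−Π). Then X² + Y² ≤ 1 in the Loewner order. -/
open scoped ComplexOrder

theorem stmt3 {H : Type*} [NormedAddCommGroup H] [InnerProductSpace ℂ H] [CompleteSpace H]
    (P : H →L[ℂ] H) (hP : IsSelfAdjoint P) (hP2 : P * P = P)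
    (χ η : H →L[ℂ] H) (hχ : IsSelfAdjoint χ) (hη : IsSelfAdjoint η)
    (hχη : LoewnerLE (χ * χ + η * η) 1)
    (X Y : H →L[ℂ] H)
    (hX : X = P * χ * P + (1 - P) * χ * (1 - P))
    (hY : Y = P * η * P + (1 - P) * η * (1 - P)) :
    LoewnerLE (X * X + Y * Y) 1 := by
  intro x
  set Q : H →L[ℂ] H := 1 - P with hQdef
  have hQ : IsSelfAdjoint Q := by
    rw [hQdef]; exact IsSelfAdjoint.sub (IsSelfAdjoint.one _) hP
  have hPQ : P * Q = 0 := by rw [hQdef, mul_sub, mul_one, hP2, sub_self]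
  have hQP : Q * P = 0 := by rw [hQdef, sub_mul, one_mul, hP2, sub_self]
  have hQ2 : Q * Q = Q := by
    rw [hQdef, mul_sub, mul_one, sub_mul, one_mul, hP2]; abel
  -- orthogonality of ranges of P and Q
  have horth : ∀ a b : H, (inner ℂ (P a) (Q b) : ℂ) = 0 := by
    intro a b
    have h1 : (inner ℂ (P a) (Q b) : ℂ) = inner ℂ a ((P * Q) b) := hP.isSymmetric a (Q b)
    rw [hPQ] at h1
    simpa using h1
  -- Pythagoras: ‖P y‖² + ‖Q y‖² = ‖y‖²
  have hpyth : ∀ y : H, ‖P y‖ ^ 2 + ‖Q y‖ ^ 2 = ‖y‖ ^ 2 := by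
    intro y
    have h := norm_add_sq_eq_norm_sq_add_norm_sq_of_inner_eq_zero (P y) (Q y) (horth y y)
    have hy : P y + Q y = y := by
      have h2 : P + Q = 1 := by rw [hQdef]; abel
      calc P y + Q y = (P + Q) y := rfl
        _ = y := by rw [h2]; rfl
    rw [hy] at h
    nlinarith [h]
  -- norm of X x
  have hXx : X x = P (χ (P x)) + Q (χ (Q x)) := by rw [hX]; rfl
  have hYx : Y x = P (η (P x)) + Q (η (Q x)) := by rw [hY]; rfl
  have hnormloc : ∀ (A : H →L[ℂ] H) (z : H),
      ‖P (A (P x)) + Q (A (Q x))‖ ^ 2 ≤ ‖A (P x)‖ ^ 2 + ‖A (Q x)‖ ^ 2 := by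
    intro A z
    have h0 := norm_add_sq_eq_norm_sq_add_norm_sq_of_inner_eq_zero
      (P (A (P x))) (Q (A (Q x))) (horth _ _)
    have h1 := hpyth (A (P x))
    have h2 := hpyth (A (Q x))
    have e1 : ‖P (A (P x))‖ ^ 2 ≤ ‖A (P x)‖ ^ 2 := by nlinarith [sq_nonneg ‖Q (A (P x))‖]
    have e2 : ‖Q (A (Q x))‖ ^ 2 ≤ ‖A (Q x)‖ ^ 2 := by nlinarith [sq_nonneg ‖P (A (Q x))‖]
    nlinarith [h0, e1, e2]
  -- the key estimate from hχη at a point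
  have hkey : ∀ y : H, ‖χ y‖ ^ 2 + ‖η y‖ ^ 2 ≤ ‖y‖ ^ 2 := by
    intro y
    have h := hχη y
    have hval : (inner ℂ y (((1 : H →L[ℂ] H) - (χ * χ + η * η)) y) : ℂ)
        = ((‖y‖ ^ 2 - ‖χ y‖ ^ 2 - ‖η y‖ ^ 2 : ℝ) : ℂ) := by
      have e1 : ((1 : H →L[ℂ] H) - (χ * χ + η * η)) y = y - (χ (χ y) + η (η y)) := rfl
      rw [e1, inner_sub_right, inner_add_right]
      have c1 : (inner ℂ y (χ (χ y)) : ℂ) = (‖χ y‖ ^ 2 : ℝ) := by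
        have e : (inner ℂ y (χ (χ y)) : ℂ) = inner ℂ (χ y) (χ y) := (hχ.isSymmetric y (χ y)).symm
        rw [e]; exact_mod_cast inner_self_eq_norm_sq_to_K (𝕜 := ℂ) (χ y)
      have c2 : (inner ℂ y (η (η y)) : ℂ) = (‖η y‖ ^ 2 : ℝ) := by
        have e : (inner ℂ y (η (η y)) : ℂ) = inner ℂ (η y) (η y) := (hη.isSymmetric y (η y)).symm
        rw [e]; exact_mod_cast inner_self_eq_norm_sq_to_K (𝕜 := ℂ) (η y)
      have c0 : (inner ℂ y y : ℂ) = (‖y‖ ^ 2 : ℝ) := by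
        exact_mod_cast inner_self_eq_norm_sq_to_K (𝕜 := ℂ) y
      rw [c0, c1, c2]
      push_cast
      ring
    rw [hval] at h
    have := (Complex.zero_le_real (x := ‖y‖ ^ 2 - ‖χ y‖ ^ 2 - ‖η y‖ ^ 2)).mp h
    linarith
  -- X, Y are self-adjoint
  have hXsa : IsSelfAdjoint X := by
    rw [hX]
    show star _ = _
    simp [star_add, star_mul, hP.star_eq, hQ.star_eq, hχ.star_eq, mul_assoc]
  have hYsa : IsSelfAdjoint Y := by
    rw [hY]
    show star _ = _
    simp [star_add, star_mul, hP.star_eq, hQ.star_eq, hη.star_eq, mul_assoc]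
  -- compute the final inner ℂ product
  have hval : (inner ℂ x (((1 : H →L[ℂ] H) - (X * X + Y * Y)) x) : ℂ)
      = ((‖x‖ ^ 2 - ‖X x‖ ^ 2 - ‖Y x‖ ^ 2 : ℝ) : ℂ) := by
    have e1 : ((1 : H →L[ℂ] H) - (X * X + Y * Y)) x = x - (X (X x) + Y (Y x)) := rfl
    rw [e1, inner_sub_right, inner_add_right]
    have c1 : (inner ℂ x (X (X x)) : ℂ) = (‖X x‖ ^ 2 : ℝ) := by
      have e : (inner ℂ x (X (X x)) : ℂ) = inner ℂ (X x) (X x) := (hXsa.isSymmetric x (X x)).symm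
      rw [e]; exact_mod_cast inner_self_eq_norm_sq_to_K (𝕜 := ℂ) (X x)
    have c2 : (inner ℂ x (Y (Y x)) : ℂ) = (‖Y x‖ ^ 2 : ℝ) := by
      have e : (inner ℂ x (Y (Y x)) : ℂ) = inner ℂ (Y x) (Y x) := (hYsa.isSymmetric x (Y x)).symm
      rw [e]; exact_mod_cast inner_self_eq_norm_sq_to_K (𝕜 := ℂ) (Y x)
    have c0 : (inner ℂ x x : ℂ) = (‖x‖ ^ 2 : ℝ) := by
      exact_mod_cast inner_self_eq_norm_sq_to_K (𝕜 := ℂ) x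
    rw [c0, c1, c2]
    push_cast
    ring
  rw [hval, Complex.zero_le_real]
  have hXn : ‖X x‖ ^ 2 ≤ ‖χ (P x)‖ ^ 2 + ‖χ (Q x)‖ ^ 2 := by rw [hXx]; exact hnormloc χ x
  have hYn : ‖Y x‖ ^ 2 ≤ ‖η (P x)‖ ^ 2 + ‖η (Q x)‖ ^ 2 := by rw [hYx]; exact hnormloc η x
  have k1 := hkey (P x)
  have k2 := hkey (Q x)
  have := hpyth x
  linarith
end
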